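/- Let a be a real number, let n be a positive integer, and let s be a complex number with Re s > a. Then ∫_{−∞}^{0} e^{(s−a)x} · [∑_{l=1}^{n} binom(n, l) (1 − 2a)^{l} x^{l−1}/(l−1)!] dx = 1 − (1 + (2a − 1)/(s − a))^{n}. -/

import Mathlib

open MeasureTheory Set Complex Filter

lemma intA (c : ℂ) (hc : 0 < c.re) (k : ℕ) :
    IntegrableOn (fun t : ℝ => (t : ℂ) ^ k * Complex.exp (-(c * t))) (Set.Ioi 0) := by
  have h := integrableOn_rpow_mul_exp_neg_mul_rpow (s := (k : ℝ)) (p := 1) (b := c.re)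
    (by exact_mod_cast neg_one_lt_zero.trans_le (Nat.cast_nonneg k)) one_pos hc
  simp only [Real.rpow_one] at h
  refine Integrable.mono' h ?_ ?_
  · apply AEStronglyMeasurable.mul
    · exact (Complex.continuous_ofReal.pow k).aestronglyMeasurable
    · exact (Complex.continuous_exp.comp (by continuity)).aestronglyMeasurable
  · filter_upwards [ae_restrict_mem measurableSet_Ioi] with t (ht : 0 < t)
    rw [norm_mul, norm_pow, Complex.norm_exp]
    simp only [Complex.norm_real, Real.norm_eq_abs, abs_of_pos ht, Complex.neg_re,
      Complex.mul_re, Complex.ofReal_re, Complex.ofReal_im, mul_zero, sub_zero,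
      Real.rpow_natCast, neg_mul]
    exact le_rfl

lemma tendB (c : ℂ) (hc : 0 < c.re) (k : ℕ) (d : ℂ) :
    Tendsto (fun t : ℝ => d * ((t : ℂ) ^ k * Complex.exp (-(c * t)))) atTop (nhds 0) := by
  rw [tendsto_zero_iff_norm_tendsto_zero]
  have h := tendsto_rpow_mul_exp_neg_mul_atTop_nhds_zero (k : ℝ) c.re hc
  have h2 : Tendsto (fun t : ℝ => ‖d‖ * (t ^ (k : ℝ) * Real.exp (-c.re * t))) atTop (nhds 0) := by
    simpa using h.const_mul ‖d‖
  apply h2.congr'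
  filter_upwards [eventually_gt_atTop 0] with t ht
  rw [norm_mul, norm_mul, norm_pow, Complex.norm_exp]
  simp only [Complex.norm_real, Real.norm_eq_abs, abs_of_pos ht, Complex.neg_re,
    Complex.mul_re, Complex.ofReal_re, Complex.ofReal_im, mul_zero, sub_zero,
    Real.rpow_natCast, neg_mul]

lemma intB (c : ℂ) (hc : 0 < c.re) : ∀ k : ℕ,
    ∫ t in Set.Ioi (0 : ℝ), (t : ℂ) ^ k * Complex.exp (-(c * t))
      = (Nat.factorial k : ℂ) / c ^ (k + 1) := by
  have hc0 : c ≠ 0 := fun h => by simp [h] at hc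
  intro k
  induction k with
  | zero =>
    have hder : ∀ x ∈ Ici (0:ℝ), HasDerivAt (fun t : ℝ => -Complex.exp (-(c * t)) / c)
        ((x:ℂ) ^ 0 * Complex.exp (-(c * x))) x := by
      intro x _
      have : HasDerivAt (fun t : ℝ => -(c * t)) (-c) x := by
        simpa [Pi.neg_def] using ((Complex.ofRealCLM.hasDerivAt.const_mul c)).neg
      have := (this.cexp).neg.div_const c
      simpa [mul_comm, mul_div_assoc, mul_div_cancel_left₀ _ hc0] using this
      
    have hlim : Tendsto (fun t : ℝ => -Complex.exp (-(c * t)) / c) atTop (nhds 0) := by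
      have := tendB c hc 0 (-1/c)
      apply this.congr
      intro t; ring
    have := integral_Ioi_of_hasDerivAt_of_tendsto' hder (intA c hc 0) hlim
    rw [this]
    simp [hc0]
    field_simp
  | succ k ih =>
    set F : ℝ → ℂ := fun t => -((t : ℂ) ^ (k + 1) * Complex.exp (-(c * t))) / c with hF
    set f' : ℝ → ℂ := fun x => (x : ℂ) ^ (k + 1) * Complex.exp (-(c * x))
      - ((k : ℂ) + 1) / c * ((x : ℂ) ^ k * Complex.exp (-(c * x))) with hf'
    have hder : ∀ x ∈ Ici (0:ℝ), HasDerivAt F (f' x) x := by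
      intro x _
      have h1 : HasDerivAt (fun t : ℝ => ((t : ℂ)) ^ (k + 1))
          (((k : ℂ) + 1) * (x : ℂ) ^ k) x := by
        simpa using (hasDerivAt_pow (k + 1) ((x : ℂ))).comp_ofReal
      have h2 : HasDerivAt (fun t : ℝ => Complex.exp (-(c * t)))
          (-c * Complex.exp (-(c * x))) x := by
        have : HasDerivAt (fun t : ℝ => -(c * t)) (-c) x := by
          simpa [Pi.neg_def] using ((Complex.ofRealCLM.hasDerivAt.const_mul c)).neg
        simpa [mul_comm] using this.cexp
      have := ((h1.mul h2).neg).div_const c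
      apply this.congr_deriv
      simp only [hf']
      field_simp
      ring
    have hint : IntegrableOn f' (Ioi 0) :=
      (intA c hc (k+1)).sub ((intA c hc k).const_mul _)
    have hlim : Tendsto F atTop (nhds 0) := by
      have := tendB c hc (k+1) (-1/c)
      apply this.congr
      intro t; simp [hF]; ring
    have key := integral_Ioi_of_hasDerivAt_of_tendsto' hder hint hlim
    have hsplit : ∫ x in Ioi (0:ℝ), f' x
        = (∫ x in Ioi (0:ℝ), (x : ℂ) ^ (k + 1) * Complex.exp (-(c * x)))
          - ((k : ℂ) + 1) / c * ∫ x in Ioi (0:ℝ), (x : ℂ) ^ k * Complex.exp (-(c * x)) := by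
      rw [← MeasureTheory.integral_const_mul]
      exact integral_sub (intA c hc (k+1)) ((intA c hc k).const_mul _)
    rw [key] at hsplit
    have hF0 : F 0 = 0 := by simp [hF]
    rw [hF0, sub_zero, ih] at hsplit
    have : (∫ x in Ioi (0:ℝ), (x : ℂ) ^ (k + 1) * Complex.exp (-(c * x)))
        = ((k : ℂ) + 1) / c * ((Nat.factorial k : ℂ) / c ^ (k + 1)) := by
      linear_combination -hsplit
    rw [this, Nat.factorial_succ]
    push_cast
    rw [pow_succ]
    field_simp
    try ring
    try exact Or.inl trivial

/-- Laplace transform of the test function `f_n`: for `Re s > a`,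
`∫_{-∞}^{0} e^{(s-a)x} P_n(x) dx = 1 - (1 + (2a-1)/(s-a))^n`. -/
theorem test_function_transform (a : ℝ) (n : ℕ) (hn : 0 < n) (s : ℂ)
    (hs : a < s.re) :
    ∫ x in Set.Iio (0 : ℝ), Complex.exp ((s - a) * x) *
        ∑ l ∈ Finset.Icc 1 n, (n.choose l : ℂ) * (1 - 2 * a) ^ l * (x : ℂ) ^ (l - 1) /
          (Nat.factorial (l - 1) : ℂ) =
      1 - (1 + (2 * a - 1) / (s - a)) ^ n := by
  set c : ℂ := s - a with hc
  have hcre : 0 < c.re := by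
    simp only [hc, Complex.sub_re, Complex.ofReal_re]
    linarith
  have hc0 : c ≠ 0 := fun h => by simp [h] at hcre
  set G : ℝ → ℂ := fun x => Complex.exp (c * x) *
      ∑ l ∈ Finset.Icc 1 n, (n.choose l : ℂ) * (1 - 2 * a) ^ l * (x : ℂ) ^ (l - 1) /
        (Nat.factorial (l - 1) : ℂ) with hG
  set d : ℕ → ℂ := fun l => (n.choose l : ℂ) * (1 - 2 * a) ^ l * (-1) ^ (l - 1) /
      (Nat.factorial (l - 1) : ℂ) with hd
  have hGneg : ∀ t : ℝ, G (-t) =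
      ∑ l ∈ Finset.Icc 1 n, d l * ((t : ℂ) ^ (l - 1) * Complex.exp (-(c * t))) := by
    intro t
    rw [hG]
    simp only
    rw [Finset.mul_sum]
    refine Finset.sum_congr rfl fun l _ => ?_
    rw [show ((-t : ℝ) : ℂ) = -(t : ℂ) from Complex.ofReal_neg t,
      show c * (-(t : ℂ)) = -(c * t) by ring, hd]
    ring
  have step1 : ∫ x in Set.Iio (0 : ℝ), G x = ∫ t in Set.Ioi (0 : ℝ), G (-t) := by
    rw [show (Set.Ioi (0:ℝ)) = Set.Ioi (-0 : ℝ) by norm_num,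
      ← integral_comp_neg_Iic (0 : ℝ) (fun t => G (-t))]
    simp only [neg_neg]
    exact setIntegral_congr_set Iio_ae_eq_Iic
  have step2 : ∫ t in Set.Ioi (0 : ℝ), G (-t)
      = ∑ l ∈ Finset.Icc 1 n, d l * ((Nat.factorial (l-1) : ℂ) / c ^ l) := by
    rw [MeasureTheory.integral_congr_ae (Filter.Eventually.of_forall hGneg)]
    rw [MeasureTheory.integral_finset_sum _
      (fun l _ => ((intA c hcre (l-1)).const_mul (d l)))]
    refine Finset.sum_congr rfl fun l hl => ?_
    rw [MeasureTheory.integral_const_mul, intB c hcre (l-1),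
      Nat.sub_add_cancel (Finset.mem_Icc.mp hl).1]
  rw [step1, step2]
  have hbin : ∑ l ∈ Finset.Icc 1 n, (n.choose l : ℂ) * ((2*a-1)/c) ^ l
      = (1 + (2*a-1)/c) ^ n - 1 := by
    rw [add_comm, add_pow]
    simp only [one_pow, mul_one]
    rw [show Finset.range (n+1) = insert 0 (Finset.Icc 1 n) by
      ext m; simp [Nat.lt_succ_iff]; omega]
    rw [Finset.sum_insert (by simp)]
    simp only [pow_zero, Nat.choose_zero_right, Nat.cast_one, one_mul]
    rw [add_comm, add_sub_cancel_right]
    refine Finset.sum_congr rfl fun l _ => ?_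
    ring
  rw [show (1 : ℂ) - (1 + (2*(a:ℂ)-1)/c)^n = -((1 + (2*(a:ℂ)-1)/c)^n - 1) by ring,
    ← hbin, ← Finset.sum_neg_distrib]
  refine Finset.sum_congr rfl fun l hl => ?_
  obtain ⟨m, rfl⟩ : ∃ m, l = m + 1 :=
    ⟨l - 1, (Nat.succ_pred_eq_of_pos (Finset.mem_Icc.mp hl).1).symm⟩
  simp only [hd, Nat.add_sub_cancel]
  have hfac : ((m.factorial : ℂ)) ≠ 0 := Nat.cast_ne_zero.2 m.factorial_ne_zero
  have h1 : ((2*(a:ℂ)-1)) ^ (m+1) = -((-1:ℂ)^m * (1-2*a)^(m+1)) := by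
    rw [show (2*(a:ℂ)-1) = -(1-2*(a:ℂ)) by ring, neg_pow, pow_succ]
    ring
  rw [div_pow, h1]
  field_simp
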